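/- Let A be an algebra over a field K (char K ≠ 2) obtained by the Cayley-Dickson process, with trace form T_C and pure trace form T_P. If the quadratic form <1> ⊥ (n × T_P) is isotropic over K for some positive integer n, then the level of A satisfies s(A) ≤ n. -/

import Mathlib

/-- An algebra `A` of dimension `2 ^ t` over a field `K` obtained by the Cayley-Dickson
process: it has a basis `{1, f₂, …, f_q}`, `q = 2 ^ t` (indexed here by
`Option (Fin (2 ^ t - 1))`, with `none` corresponding to the unit `1`), such that
`fᵢ² = αᵢ • 1` for nonzero scalars `αᵢ` and `fᵢ fⱼ = -fⱼ fᵢ` for `i ≠ j`.  The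
multiplication is not assumed associative, but is `K`-bilinear. -/
structure CayleyDickson (K : Type) [Field K] (A : Type) [NonAssocRing A] [Module K A]
    (t : ℕ) : Type where
  smul_mul : ∀ (c : K) (x y : A), (c • x) * y = c • (x * y)
  mul_smul : ∀ (c : K) (x y : A), x * (c • y) = c • (x * y)
  b : Module.Basis (Option (Fin (2 ^ t - 1))) K A
  bOne : b none = 1
  α : Fin (2 ^ t - 1) → K
  α_ne_zero : ∀ i, α i ≠ 0
  sq : ∀ i, b (some i) * b (some i) = α i • (1 : A)
  anticomm : ∀ i j, i ≠ j → b (some i) * b (some j) = -(b (some j) * b (some i))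

lemma pure_sq (K A : Type) [Field K] [NonAssocRing A] [Module K A]
    (t : ℕ) (hchar : (2 : K) ≠ 0) (CD : CayleyDickson K A t)
    (c : Fin (2 ^ t - 1) → K) :
    (∑ i, c i • CD.b (some i)) * (∑ i, c i • CD.b (some i))
      = (∑ i, CD.α i * c i ^ 2) • (1 : A) := by
  have expand : (∑ i, c i • CD.b (some i)) * (∑ i, c i • CD.b (some i))
      = ∑ i, ∑ j, (c i * c j) • (CD.b (some i) * CD.b (some j)) := by
    rw [Finset.sum_mul]
    refine Finset.sum_congr rfl fun i _ => ?_
    rw [Finset.mul_sum]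
    refine Finset.sum_congr rfl fun j _ => ?_
    rw [CD.smul_mul, CD.mul_smul, smul_smul]
  set g : Fin (2 ^ t - 1) → Fin (2 ^ t - 1) → A :=
    fun i j => (c i * c j) • (CD.b (some i) * CD.b (some j)) with hg
  have hanti : ∀ i j, i ≠ j → g i j + g j i = 0 := by
    intro i j hij
    simp only [hg, CD.anticomm i j hij, smul_neg, mul_comm (c i) (c j)]
    abel
  have key : (∑ i, ∑ j, g i j) = ∑ i, g i i := by
    have h2 : (2 : K) • (∑ i, ∑ j, g i j) = (2 : K) • (∑ i, g i i) := by
      rw [two_smul, two_smul]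
      calc (∑ i, ∑ j, g i j) + (∑ i, ∑ j, g i j)
          = (∑ i, ∑ j, g i j) + (∑ j, ∑ i, g i j) := by rw [Finset.sum_comm]
        _ = ∑ i, ∑ j, (g i j + g j i) := by
            rw [← Finset.sum_add_distrib]
            refine Finset.sum_congr rfl fun i _ => ?_
            rw [← Finset.sum_add_distrib]
        _ = ∑ i, ∑ j, (if j = i then g i i + g i i else 0) := by
            refine Finset.sum_congr rfl fun i _ => Finset.sum_congr rfl fun j _ => ?_
            by_cases h : j = i
            · subst h; simp
            · rw [if_neg h, hanti i j (Ne.symm h)]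
        _ = ∑ i, (g i i + g i i) := by
            refine Finset.sum_congr rfl fun i _ => ?_
            exact Finset.sum_ite_eq' Finset.univ i (fun _ => g i i + g i i)
              |>.trans (by simp)
        _ = (∑ i, g i i) + (∑ i, g i i) := Finset.sum_add_distrib
    exact smul_right_injective A hchar h2
  rw [expand, key]
  have hdiag : ∀ i, g i i = (CD.α i * c i ^ 2) • (1 : A) := by
    intro i
    rw [hg]
    dsimp only
    rw [CD.sq i, smul_smul]
    congr 1
    ring
  simp only [hdiag]
  rw [← Finset.sum_smul]

/-- If the quadratic form `<1> ⊥ (n × T_P)` (with `T_P = <α₂, …, α_q>` the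
pure trace form of the Cayley-Dickson algebra `A`) is isotropic over `K` for a positive
integer `n`, then the level of `A` satisfies `s(A) ≤ n`, i.e. `-1` is a sum of `n`
squares in `A`. -/
theorem level_le_of_isotropic (K A : Type) [Field K] [NonAssocRing A] [Module K A]
    (t : ℕ) (hchar : (2 : K) ≠ 0) (CD : CayleyDickson K A t) (n : ℕ) (hn : 0 < n)
    (hiso : ∃ (x : K) (y : Fin n → Fin (2 ^ t - 1) → K), (x ≠ 0 ∨ y ≠ 0) ∧
      x ^ 2 + ∑ m, ∑ i, CD.α i * y m i ^ 2 = 0) :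
    ∃ f : Fin n → A, ∑ i, f i * f i = -1 := by
  obtain ⟨x, y, hne, hsum⟩ := hiso
  -- First produce y' with ∑ m, ∑ i, α i * y' m i ^ 2 = -1
  have hmain : ∃ y' : Fin n → Fin (2 ^ t - 1) → K,
      ∑ m, ∑ i, CD.α i * y' m i ^ 2 = -1 := by
    by_cases hx : x = 0
    · -- pure isotropic vector case
      subst hx
      have hy : y ≠ 0 := hne.resolve_left (by simp)
      have hS : ∑ m, ∑ i, CD.α i * y m i ^ 2 = 0 := by simpa using hsum
      obtain ⟨m0, hm0⟩ := Function.ne_iff.mp hy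
      obtain ⟨i0, hi0⟩ := Function.ne_iff.mp hm0
      have hi0' : y m0 i0 ≠ 0 := by simpa using hi0
      set β := CD.α i0 with hβ
      have hβ0 : β ≠ 0 := CD.α_ne_zero i0
      set a : K := (-1 - β) / (2 * β * y m0 i0) with ha
      refine ⟨fun m i => a * y m i + (if m = m0 ∧ i = i0 then 1 else 0), ?_⟩
      have split : ∀ m i, CD.α i * (a * y m i + (if m = m0 ∧ i = i0 then 1 else 0)) ^ 2
          = CD.α i * (a * y m i) ^ 2
            + (if m = m0 ∧ i = i0 then CD.α i * (2 * (a * y m i) + 1) else 0) := by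
        intro m i
        by_cases h : m = m0 ∧ i = i0
        · rw [if_pos h, if_pos h]; ring
        · rw [if_neg h, if_neg h]; ring
      simp only [split, Finset.sum_add_distrib]
      have h1 : ∑ m, ∑ i, CD.α i * (a * y m i) ^ 2 = 0 := by
        have : ∀ m i, CD.α i * (a * y m i) ^ 2 = a ^ 2 * (CD.α i * y m i ^ 2) := by
          intro m i; ring
        simp only [this, ← Finset.mul_sum, hS, mul_zero]
      have h2 : ∑ m, ∑ i, (if m = m0 ∧ i = i0 then CD.α i * (2 * (a * y m i) + 1) else 0)
          = β * (2 * (a * y m0 i0) + 1) := by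
        have : ∀ m : Fin n, (∑ i, (if m = m0 ∧ i = i0 then CD.α i * (2 * (a * y m i) + 1) else 0))
            = if m = m0 then β * (2 * (a * y m0 i0) + 1) else 0 := by
          intro m
          by_cases hm : m = m0
          · rw [if_pos hm, hm]
            have : ∀ i, (if m0 = m0 ∧ i = i0 then CD.α i * (2 * (a * y m0 i) + 1) else 0)
                = if i = i0 then β * (2 * (a * y m0 i0) + 1) else 0 := by
              intro i
              by_cases hi : i = i0
              · subst hi; simp [hβ]
              · simp [hi]
            simp only [this]
            simp [hβ]
          · rw [if_neg hm]
            refine Finset.sum_eq_zero fun i _ => ?_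
            simp [hm]
        simp only [this]
        simp
      rw [h1, h2, zero_add, ha]
      field_simp
      ring
    · -- x ≠ 0 case: scale
      refine ⟨fun m i => y m i / x, ?_⟩
      have : ∀ m i, CD.α i * (y m i / x) ^ 2 = (CD.α i * y m i ^ 2) * (1 / x ^ 2) := by
        intro m i; field_simp
      simp only [this, ← Finset.sum_mul]
      have hS : ∑ m, ∑ i, CD.α i * y m i ^ 2 = -x ^ 2 := by linear_combination hsum
      rw [hS]
      field_simp
  obtain ⟨y', hy'⟩ := hmain
  refine ⟨fun m => ∑ i, y' m i • CD.b (some i), ?_⟩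
  have : ∀ m : Fin n, (∑ i, y' m i • CD.b (some i)) * (∑ i, y' m i • CD.b (some i))
      = (∑ i, CD.α i * y' m i ^ 2) • (1 : A) :=
    fun m => pure_sq K A t hchar CD (y' m)
  simp only [this, ← Finset.sum_smul, hy', neg_smul, one_smul]
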